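/- Under the exact (continuous-time) flow ġ = -(g + V + W p + c(t)) with gᵢ = φᵢ(pᵢ) for a family of strictly increasing differentiable reparameterizations φᵢ with φᵢ'(pᵢ) = Mᵢ(pᵢ) > 0, and c(t) chosen so that ∑ pᵢ(t) = 1 for all t, the free energy F(p(t)) is nonincreasing in t whenever ∇F(p) = φ(p) + V + W p componentwise; moreover dF/dt = -∑ᵢ (∂F/∂pᵢ + c)²/Mᵢ(pᵢ) ≤ 0. -/

import Mathlib

theorem free_energy_decreases_along_flow (n : ℕ) (V : Fin n → ℝ)
    (W : Matrix (Fin n) (Fin n) ℝ)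
    (φ M : Fin n → ℝ → ℝ)
    (hφ : ∀ i x, HasDerivAt (φ i) (M i x) x) (hM : ∀ i x, 0 < M i x)
    (F : (Fin n → ℝ) → ℝ) (hFdiff : Differentiable ℝ F)
    (hgrad : ∀ q : Fin n → ℝ, (∀ i, 0 < q i) → ∀ i,
      fderiv ℝ F q (Pi.single i 1) = φ i (q i) + V i + ∑ j, W i j * q j)
    (p : ℝ → Fin n → ℝ) (c : ℝ → ℝ)
    (hp : ∀ t i, 0 < p t i)
    (hpdiff : ∀ t i, DifferentiableAt ℝ (fun s => p s i) t)
    (hnorm : ∀ t, ∑ i, p t i = 1)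
    (hflow : ∀ t i, HasDerivAt (fun s => φ i (p s i))
      (-(φ i (p t i) + V i + (∑ j, W i j * p t j) + c t)) t) :
    (∀ t, HasDerivAt (fun s => F (p s))
      (-(∑ i, (φ i (p t i) + V i + (∑ j, W i j * p t j) + c t) ^ 2 / M i (p t i))) t) ∧
    (∀ t, -(∑ i, (φ i (p t i) + V i + (∑ j, W i j * p t j) + c t) ^ 2 / M i (p t i)) ≤ 0) ∧
    (∀ s t, s ≤ t → F (p t) ≤ F (p s)) := by
  -- notation
  set g : ℝ → Fin n → ℝ := fun t i => φ i (p t i) + V i + (∑ j, W i j * p t j) + c t with hg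
  set d : ℝ → Fin n → ℝ := fun t i => -(g t i) / M i (p t i) with hd
  have hMne : ∀ t i, M i (p t i) ≠ 0 := fun t i => (hM i (p t i)).ne'
  -- each coordinate derivative
  have hder : ∀ t i, HasDerivAt (fun s => p s i) (d t i) t := by
    intro t i
    have hdp := (hpdiff t i).hasDerivAt
    have hcomp := (hφ i (p t i)).comp t hdp
    have huniq := (hflow t i).unique hcomp
    have hdv : deriv (fun s => p s i) t = d t i := by
      simp only [hd, hg]
      rw [eq_div_iff (hMne t i)]
      linear_combination -huniq
    rw [hdv] at hdp
    exact hdp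
  -- sum of derivatives is 0
  have hsum : ∀ t, ∑ i, d t i = 0 := by
    intro t
    have h1 : HasDerivAt (fun s => ∑ i, p s i) (∑ i, d t i) t :=
      HasDerivAt.fun_sum (fun i _ => hder t i)
    have h2 : (fun s => ∑ i, p s i) = fun _ => (1 : ℝ) := funext hnorm
    rw [h2] at h1
    exact h1.unique (hasDerivAt_const t 1)
  -- derivative of F ∘ p
  have hFd : ∀ t, HasDerivAt (fun s => F (p s))
      (-(∑ i, (g t i) ^ 2 / M i (p t i))) t := by
    intro t
    have hP : HasDerivAt p (d t) t := hasDerivAt_pi.2 (hder t)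
    have hc := ((hFdiff (p t)).hasFDerivAt).comp_hasDerivAt t hP
    have hval : (fderiv ℝ F (p t)) (d t) = -(∑ i, (g t i) ^ 2 / M i (p t i)) := by
      have hrepr : d t = ∑ i, d t i • (Pi.single i (1 : ℝ) : Fin n → ℝ) := by
        funext j
        simp [Pi.single_apply, Finset.sum_apply]
      rw [hrepr, map_sum]
      have : ∀ i, (fderiv ℝ F (p t)) (d t i • (Pi.single i (1 : ℝ) : Fin n → ℝ))
          = d t i * (φ i (p t i) + V i + ∑ j, W i j * p t j) := by
        intro i
        rw [map_smul, hgrad (p t) (hp t), smul_eq_mul]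
      rw [Finset.sum_congr rfl fun i _ => this i]
      have key : ∀ i, d t i * (φ i (p t i) + V i + ∑ j, W i j * p t j)
          = -((g t i) ^ 2 / M i (p t i)) - c t * d t i := by
        intro i
        have := hMne t i
        simp only [hd, hg]
        field_simp
        ring
      rw [Finset.sum_congr rfl fun i _ => key i, Finset.sum_sub_distrib,
        ← Finset.mul_sum, hsum, mul_zero, sub_zero, ← Finset.sum_neg_distrib]
    rw [hval] at hc
    exact hc
  have hnonpos : ∀ t, -(∑ i, (g t i) ^ 2 / M i (p t i)) ≤ 0 := by
    intro t
    have : (0:ℝ) ≤ ∑ i, (g t i) ^ 2 / M i (p t i) :=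
      Finset.sum_nonneg fun i _ => div_nonneg (sq_nonneg _) (hM i (p t i)).le
    linarith
  refine ⟨hFd, hnonpos, ?_⟩
  have hanti : Antitone (fun s => F (p s)) := by
    apply antitone_of_deriv_nonpos
    · exact fun t => (hFd t).differentiableAt
    · intro t
      rw [(hFd t).deriv]
      exact hnonpos t
  exact fun s t hst => hanti hst
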